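/- The permutation σ output by the Deodhar maximal lift procedure (inputs p, Y, w with Y ≤ {w_1,...,w_p}) satisfies: σW_p = Y, σ ≤ w in Bruhat order, and for any v ∈ S_n with vW_p = Y and v ≰ σ, one has v ≰ w. Consequently σ is the unique maximal element of {v ∈ S_n : vW_p = Y, v ≤ w}. -/

import Mathlib

/-- Dominance order on equal-cardinality finite sets of naturals:
the i-th smallest element of `E` is at most the i-th smallest element of `F`. -/
def Dom (E F : Finset ℕ) : Prop :=
  List.Forall₂ (· ≤ ·) (Finset.sort E (· ≤ ·)) (Finset.sort F (· ≤ ·))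

/-- The k-th smallest element of `E` (1-based), with junk value 0 out of range. -/
def nth (E : Finset ℕ) (k : ℕ) : ℕ := (Finset.sort E (· ≤ ·)).getD (k - 1) 0

/-- The (0-based) level of `e` in `E`: its index in the increasing enumeration. -/
def level (e : ℕ) (E : Finset ℕ) : ℕ := List.idxOf e (Finset.sort E (· ≤ ·))

/-- The Bruhat order, via the tableau criterion, on permutations of `[n] = {1,...,n}`
given in one-line notation as functions `ℕ → ℕ`. -/
def Bruhat (n : ℕ) (v w : ℕ → ℕ) : Prop :=
  ∀ i ≤ n, Dom ((Finset.Icc 1 i).image v) ((Finset.Icc 1 i).image w)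

/-- number of elements of `E` that are `≥ m`. -/
def cnt (E : Finset ℕ) (m : ℕ) : ℕ := (E.filter (fun x => m ≤ x)).card

lemma nth_eq_get (E : Finset ℕ) (k : ℕ) (h1 : 1 ≤ k) (h2 : k ≤ E.card) :
    nth E k = (Finset.sort E (· ≤ ·)).get ⟨k - 1, by
      rw [Finset.length_sort]; omega⟩ := by
  unfold nth
  exact List.getD_eq_get _ _ ⟨k - 1, _⟩

lemma nth_mem (E : Finset ℕ) (k : ℕ) (h1 : 1 ≤ k) (h2 : k ≤ E.card) : nth E k ∈ E := by
  rw [nth_eq_get E k h1 h2]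
  rw [← Finset.mem_sort (α := ℕ) (· ≤ ·)]
  exact List.get_mem _ _

lemma nth_lt_nth (E : Finset ℕ) {k k' : ℕ} (h1 : 1 ≤ k) (h : k < k') (h2 : k' ≤ E.card) :
    nth E k < nth E k' := by
  rw [nth_eq_get E k h1 (by omega), nth_eq_get E k' (by omega) h2]
  exact (Finset.sortedLT_sort E).strictMono_get (by simp; omega)

lemma nth_le_nth (E : Finset ℕ) {k k' : ℕ} (h1 : 1 ≤ k) (h : k ≤ k') (h2 : k' ≤ E.card) :
    nth E k ≤ nth E k' := by
  rcases eq_or_lt_of_le h with rfl | h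
  · exact le_refl _
  · exact (nth_lt_nth E h1 h h2).le

lemma nth_surj (E : Finset ℕ) {x : ℕ} (hx : x ∈ E) :
    ∃ k, 1 ≤ k ∧ k ≤ E.card ∧ nth E k = x := by
  have hx' : x ∈ Finset.sort E (· ≤ ·) := (Finset.mem_sort _).2 hx
  obtain ⟨⟨i, hi⟩, hget⟩ := List.mem_iff_get.1 hx'
  rw [Finset.length_sort] at hi
  exact ⟨i + 1, by omega, by omega, by rw [nth_eq_get E (i+1) (by omega) (by omega)]; simpa using hget⟩

lemma cnt_le_card (E : Finset ℕ) (m : ℕ) : cnt E m ≤ E.card :=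
  Finset.card_le_card (Finset.filter_subset _ _)

lemma cnt_zero (E : Finset ℕ) : cnt E 0 = E.card := by
  unfold cnt; congr 1; apply Finset.filter_true_of_mem; intro x _; omega

lemma cnt_anti (E : Finset ℕ) {m m' : ℕ} (h : m ≤ m') : cnt E m' ≤ cnt E m := by
  apply Finset.card_le_card
  intro x hx
  simp only [Finset.mem_filter] at *
  exact ⟨hx.1, le_trans h hx.2⟩

lemma cnt_subset {E F : Finset ℕ} (h : E ⊆ F) (m : ℕ) : cnt E m ≤ cnt F m := by
  apply Finset.card_le_card
  intro x hx
  simp only [Finset.mem_filter] at *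
  exact ⟨h hx.1, hx.2⟩

lemma cnt_insert {x : ℕ} {E : Finset ℕ} (hx : x ∉ E) (m : ℕ) :
    cnt (insert x E) m = cnt E m + if m ≤ x then 1 else 0 := by
  unfold cnt
  rw [Finset.filter_insert]
  split
  · rw [Finset.card_insert_of_notMem (fun h => hx (Finset.mem_filter.1 h).1)]
  · omega

lemma cnt_erase {x : ℕ} {E : Finset ℕ} (hx : x ∈ E) (m : ℕ) :
    cnt (E.erase x) m = cnt E m - (if m ≤ x then 1 else 0) := by
  have h1 : E = insert x (E.erase x) := by
    rw [Finset.insert_erase hx]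
  have h2 : x ∉ E.erase x := Finset.notMem_erase _ _
  have := cnt_insert h2 m
  rw [← h1] at this
  omega

lemma cnt_succ (E : Finset ℕ) (x : ℕ) :
    cnt E x = cnt E (x + 1) + (if x ∈ E then 1 else 0) := by
  unfold cnt
  have : E.filter (fun y => x ≤ y) = (E.filter (fun y => x + 1 ≤ y)) ∪ (E.filter (fun y => y = x)) := by
    ext y
    simp only [Finset.mem_filter, Finset.mem_union]
    constructor
    · rintro ⟨hy, h⟩
      rcases eq_or_lt_of_le h with rfl | h
      · exact Or.inr ⟨hy, rfl⟩
      · exact Or.inl ⟨hy, h⟩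
    · rintro (⟨hy, h⟩ | ⟨hy, rfl⟩)
      · exact ⟨hy, by omega⟩
      · exact ⟨hy, le_refl _⟩
  rw [this, Finset.card_union_of_disjoint]
  · congr 1
    split
    · rename_i h
      rw [Finset.filter_eq']
      simp [h]
    · rename_i h
      rw [Finset.filter_eq']
      simp [h]
  · rw [Finset.disjoint_filter]
    rintro y _ h rfl
    omega

/-- The set of elements `≥ nth E k` is the image of `[k, card]` under `nth E`. -/
lemma nth_cnt (E : Finset ℕ) (k : ℕ) (h1 : 1 ≤ k) (h2 : k ≤ E.card) :
    cnt E (nth E k) = E.card + 1 - k := by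
  have himg : E.filter (fun y => nth E k ≤ y) = (Finset.Icc k E.card).image (nth E) := by
    ext y
    simp only [Finset.mem_filter, Finset.mem_image, Finset.mem_Icc]
    constructor
    · rintro ⟨hy, hky⟩
      obtain ⟨u, hu1, hu2, rfl⟩ := nth_surj E hy
      refine ⟨u, ⟨?_, hu2⟩, rfl⟩
      by_contra h
      exact absurd (nth_lt_nth E hu1 (by omega) h2) (by omega)
    · rintro ⟨u, ⟨hu1, hu2⟩, rfl⟩
      exact ⟨nth_mem E u (by omega) hu2, nth_le_nth E h1 hu1 hu2⟩
  unfold cnt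
  rw [himg, Finset.card_image_of_injOn, Nat.card_Icc]
  intro a ha b hb hab
  simp only [Finset.coe_Icc, Set.mem_Icc] at ha hb
  by_contra hne
  rcases Nat.lt_or_ge a b with h | h
  · exact absurd hab (Nat.ne_of_lt (nth_lt_nth E (by omega) h hb.2))
  · have : b < a := by omega
    exact absurd hab.symm (Nat.ne_of_lt (nth_lt_nth E (by omega) this ha.2))

/-- Bridge, backward: enough elements `≥ m` forces `nth E k ≥ m`. -/
lemma le_nth_of_cnt {E : Finset ℕ} {k m : ℕ} (h1 : 1 ≤ k) (h2 : k ≤ E.card)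
    (h : E.card + 1 - k ≤ cnt E m) : m ≤ nth E k := by
  by_contra hlt
  push_neg at hlt
  -- every element ≥ m has index > k
  have himg : E.filter (fun y => m ≤ y) ⊆ (Finset.Icc (k+1) E.card).image (nth E) := by
    intro y hy
    simp only [Finset.mem_filter] at hy
    obtain ⟨u, hu1, hu2, rfl⟩ := nth_surj E hy.1
    simp only [Finset.mem_image, Finset.mem_Icc]
    refine ⟨u, ⟨?_, hu2⟩, rfl⟩
    by_contra h'
    have : nth E u ≤ nth E k := nth_le_nth E hu1 (by omega) h2
    omega
  have hc : cnt E m ≤ E.card - k := by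
    calc cnt E m ≤ ((Finset.Icc (k+1) E.card).image (nth E)).card := Finset.card_le_card himg
    _ ≤ (Finset.Icc (k+1) E.card).card := Finset.card_image_le
    _ = E.card - k := by rw [Nat.card_Icc]; omega
  omega

/-- Bridge, forward. -/
lemma cnt_of_le_nth {E : Finset ℕ} {k m : ℕ} (h1 : 1 ≤ k) (h2 : k ≤ E.card)
    (h : m ≤ nth E k) : E.card + 1 - k ≤ cnt E m := by
  calc E.card + 1 - k = cnt E (nth E k) := (nth_cnt E k h1 h2).symm
  _ ≤ cnt E m := cnt_anti E h

/-- Characterization of `nth` via counting. -/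
lemma nth_char {E : Finset ℕ} {k x : ℕ} (h1 : 1 ≤ k) (h2 : k ≤ E.card)
    (hx : x ∈ E) (hc : cnt E (x + 1) = E.card - k) : nth E k = x := by
  have hge : x ≤ nth E k := by
    apply le_nth_of_cnt h1 h2
    rw [cnt_succ E x, hc, if_pos hx]
    omega
  have hle : nth E k ≤ x := by
    by_contra hlt
    push_neg at hlt
    have := cnt_of_le_nth h1 h2 (show x + 1 ≤ nth E k by omega)
    omega
  omega

/-- Cardinality lower bound from a run of nth-values landing in `F`. -/
lemma card_le_of_nth_range {V F : Finset ℕ} {k l : ℕ} (h1 : 1 ≤ k) (h2 : l ≤ V.card)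
    (h : ∀ u, k ≤ u → u ≤ l → nth V u ∈ F) : l + 1 - k ≤ F.card := by
  rcases Nat.lt_or_ge l k with hlt | hge
  · omega
  have himg : (Finset.Icc k l).image (nth V) ⊆ F := by
    intro y hy
    simp only [Finset.mem_image, Finset.mem_Icc] at hy
    obtain ⟨u, ⟨hu1, hu2⟩, rfl⟩ := hy
    exact h u hu1 hu2
  have hcard : ((Finset.Icc k l).image (nth V)).card = l + 1 - k := by
    rw [Finset.card_image_of_injOn, Nat.card_Icc]
    intro a ha b hb hab
    simp only [Finset.coe_Icc, Set.mem_Icc] at ha hb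
    by_contra hne
    rcases Nat.lt_or_ge a b with h' | h'
    · exact absurd hab (Nat.ne_of_lt (nth_lt_nth V (by omega) h' (by omega)))
    · have : b < a := by omega
      exact absurd hab.symm (Nat.ne_of_lt (nth_lt_nth V (by omega) this (by omega)))
  calc l + 1 - k = ((Finset.Icc k l).image (nth V)).card := hcard.symm
  _ ≤ F.card := Finset.card_le_card himg

/-- Complement: elements ≤ x vs elements > x. -/
lemma cnt_compl (E : Finset ℕ) (x : ℕ) :
    E.card = cnt E (x + 1) + (E.filter (fun y => y ≤ x)).card := by
  unfold cnt
  rw [← Finset.card_union_of_disjoint]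
  · congr 1
    ext y
    simp only [Finset.mem_union, Finset.mem_filter]
    constructor
    · intro hy
      rcases Nat.lt_or_ge x y with h | h
      · exact Or.inl ⟨hy, by omega⟩
      · exact Or.inr ⟨hy, h⟩
    · rintro (⟨hy, _⟩ | ⟨hy, _⟩) <;> exact hy
  · rw [Finset.disjoint_filter]
    rintro y _ h hle
    omega

lemma nth_to_cnt {E F : Finset ℕ} (hcard : E.card = F.card)
    (h : ∀ r, 1 ≤ r → r ≤ E.card → nth E r ≤ nth F r) :
    ∀ m, cnt E m ≤ cnt F m := by
  intro m
  rcases Nat.eq_zero_or_pos (cnt E m) with h0 | h0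
  · omega
  set c := cnt E m with hc
  have hcle : c ≤ E.card := cnt_le_card E m
  set k := E.card + 1 - c with hk
  have hk1 : 1 ≤ k := by omega
  have hk2 : k ≤ E.card := by omega
  have h1 : m ≤ nth E k := le_nth_of_cnt hk1 hk2 (by omega)
  have h2 : nth E k ≤ nth F k := h k hk1 hk2
  have := cnt_of_le_nth (E := F) hk1 (by omega) (le_trans h1 h2)
  omega

lemma cnt_to_nth {E F : Finset ℕ} (hcard : E.card = F.card)
    (h : ∀ m, cnt E m ≤ cnt F m) :
    ∀ r, 1 ≤ r → r ≤ E.card → nth E r ≤ nth F r := by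
  intro r h1 h2
  apply le_nth_of_cnt h1 (by omega)
  have := nth_cnt E r h1 h2
  have := h (nth E r)
  omega

lemma dom_iff {E F : Finset ℕ} :
    Dom E F ↔ E.card = F.card ∧ ∀ m, cnt E m ≤ cnt F m := by
  unfold Dom
  rw [List.forall₂_iff_get]
  simp only [Finset.length_sort]
  constructor
  · rintro ⟨hcard, hget⟩
    refine ⟨hcard, nth_to_cnt hcard ?_⟩
    intro r hr1 hr2
    have := hget (r - 1) (by omega) (by omega)
    rwa [nth_eq_get E r hr1 hr2, nth_eq_get F r (by omega) (by omega)]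
  · rintro ⟨hcard, hcnt⟩
    refine ⟨hcard, ?_⟩
    intro i hi1 hi2
    have := cnt_to_nth hcard hcnt (i + 1) (by omega) (by omega)
    rw [nth_eq_get E (i+1) (by omega) (by omega), nth_eq_get F (i+1) (by omega) (by omega)] at this
    simpa using this

lemma cnt_split {E : Finset ℕ} {m z : ℕ} (h : m ≤ z) :
    cnt E m = (E.filter (fun x => m ≤ x ∧ x < z)).card + cnt E z := by
  unfold cnt
  rw [← Finset.card_union_of_disjoint]
  · congr 1
    ext y
    simp only [Finset.mem_union, Finset.mem_filter]
    constructor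
    · intro hy
      rcases Nat.lt_or_ge y z with h' | h'
      · exact Or.inl ⟨hy.1, hy.2, h'⟩
      · exact Or.inr ⟨hy.1, h'⟩
    · rintro (⟨hy, h1, _⟩ | ⟨hy, h1⟩)
      · exact ⟨hy, h1⟩
      · exact ⟨hy, by omega⟩
  · rw [Finset.disjoint_filter]
    rintro y _ ⟨_, h1⟩ h2
    omega

lemma icc_succ_image (f : ℕ → ℕ) (i : ℕ) :
    (Finset.Icc 1 (i+1)).image f = insert (f (i+1)) ((Finset.Icc 1 i).image f) := by
  have : Finset.Icc 1 (i+1) = insert (i+1) (Finset.Icc 1 i) := by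
    ext a; simp only [Finset.mem_Icc, Finset.mem_insert]; omega
  rw [this, Finset.image_insert]

lemma icc_zero_image (f : ℕ → ℕ) : (Finset.Icc 1 0).image f = ∅ := by
  simp

-- generic facts about permutation images
lemma img_card {n : ℕ} {f : ℕ → ℕ} (hf : Set.BijOn f (Set.Icc 1 n) (Set.Icc 1 n))
    {i : ℕ} (hi : i ≤ n) : ((Finset.Icc 1 i).image f).card = i := by
  rw [Finset.card_image_of_injOn (by rw [Finset.coe_Icc]; exact hf.injOn.mono (Set.Icc_subset_Icc_right hi)), Nat.card_Icc]
  omega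

lemma img_new {n : ℕ} {f : ℕ → ℕ} (hf : Set.BijOn f (Set.Icc 1 n) (Set.Icc 1 n))
    {i : ℕ} (hi : i + 1 ≤ n) : f (i+1) ∉ (Finset.Icc 1 i).image f := by
  rintro hmem
  obtain ⟨x, hx, heq⟩ := Finset.mem_image.1 hmem
  rw [Finset.mem_Icc] at hx
  have := hf.injOn (Set.mem_Icc.2 ⟨hx.1, by omega⟩) (Set.mem_Icc.2 ⟨by omega, hi⟩) heq
  omega

theorem stmt16 (n p : ℕ) (hp : p ≤ n) (w σ : ℕ → ℕ)
    (hw : Set.BijOn w (Set.Icc 1 n) (Set.Icc 1 n))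
    (Y : Finset ℕ) (hYs : Y ⊆ Finset.Icc 1 n) (hYc : Y.card = p)
    -- Y ≤ {w_1,...,w_p}:
    (hdom : Dom Y ((Finset.Icc 1 p).image w))
    -- for j ≤ p, σ_j is the maximum element of Y \ {σ_1,...,σ_{j-1}} not exceeding w_j:
    (hσ1 : ∀ j, 1 ≤ j → j ≤ p →
      ((Y \ ((Finset.Icc 1 (j - 1)).image σ)).filter (fun y => y ≤ w j)).max = (σ j : WithBot ℕ))
    -- for j > p, σ_j is the output of the subroutine with A = {w_1,...,w_{j-1}},
    -- B = {σ_1,...,σ_{j-1}}, γ = w_j (so that A ∪ {γ} = {w_1,...,w_j}):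
    -- q is least in {1,...,j} with b̃_q > ã'_q (with b̃_j = ∞), and σ_j = ã'_q:
    (hσ2 : ∀ j, p < j → j ≤ n → ∃ q, 1 ≤ q ∧ q ≤ j ∧
      (q ≤ j - 1 →
        nth ((Finset.Icc 1 (j - 1)).image σ) q > nth ((Finset.Icc 1 j).image w) q) ∧
      (∀ r, 1 ≤ r → r < q →
        nth ((Finset.Icc 1 (j - 1)).image σ) r ≤ nth ((Finset.Icc 1 j).image w) r) ∧
      σ j = nth ((Finset.Icc 1 j).image w) q) :
    (Finset.Icc 1 p).image σ = Y ∧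
    Bruhat n σ w ∧
    (∀ v : ℕ → ℕ, Set.BijOn v (Set.Icc 1 n) (Set.Icc 1 n) →
      (Finset.Icc 1 p).image v = Y → ¬ Bruhat n v σ → ¬ Bruhat n v w) ∧
    (∀ v : ℕ → ℕ, Set.BijOn v (Set.Icc 1 n) (Set.Icc 1 n) →
      (Finset.Icc 1 p).image v = Y → Bruhat n v w → Bruhat n v σ) := by
  classical
  -- Phase 1 invariants
  have phase1 : ∀ j, j ≤ p →
      ((Finset.Icc 1 j).image σ ⊆ Y ∧ ((Finset.Icc 1 j).image σ).card = j) ∧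
      (∀ m, cnt ((Finset.Icc 1 j).image σ) m ≤ cnt ((Finset.Icc 1 j).image w) m) ∧
      (∀ y ∈ Y, y ∉ (Finset.Icc 1 j).image σ →
        cnt ((Finset.Icc 1 j).image w) y ≤ cnt ((Finset.Icc 1 j).image σ) y) := by
    intro j
    induction j with
    | zero =>
      intro _
      rw [icc_zero_image, icc_zero_image]
      refine ⟨⟨Finset.empty_subset _, Finset.card_empty⟩, fun m => le_refl _, fun y _ _ => le_refl _⟩
    | succ i ih =>
      intro hip
      obtain ⟨⟨hSY, hScard⟩, hdomi, hblock⟩ := ih (by omega)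
      have hmax := hσ1 (i+1) (by omega) hip
      rw [Nat.add_sub_cancel] at hmax
      have hσmem := Finset.mem_of_max (a := σ (i+1)) hmax
      rw [Finset.mem_filter, Finset.mem_sdiff] at hσmem
      obtain ⟨⟨hσY, hσnot⟩, hσle⟩ := hσmem
      have hσmax : ∀ y, y ∈ Y → y ∉ (Finset.Icc 1 i).image σ → y ≤ w (i+1) → y ≤ σ (i+1) := by
        intro y hy1 hy2 hy3
        have : (y : WithBot ℕ) ≤ (σ (i+1) : WithBot ℕ) := by
          rw [← hmax]
          exact Finset.le_max (by rw [Finset.mem_filter, Finset.mem_sdiff]; exact ⟨⟨hy1, hy2⟩, hy3⟩)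
        exact_mod_cast this
      rw [icc_succ_image σ i, icc_succ_image w i]
      have hwnot : w (i+1) ∉ (Finset.Icc 1 i).image w := img_new hw (by omega)
      refine ⟨⟨?_, ?_⟩, ?_, ?_⟩
      · exact Finset.insert_subset hσY hSY
      · rw [Finset.card_insert_of_notMem hσnot, hScard]
      · intro m
        rw [cnt_insert hσnot, cnt_insert hwnot]
        have : (if m ≤ σ (i+1) then 1 else 0) ≤ (if m ≤ w (i+1) then (1:ℕ) else 0) := by
          split
          · rw [if_pos (by omega)]
          · omega
        have := hdomi m
        omega
      · intro y hy hynot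
        rw [Finset.mem_insert] at hynot
        push_neg at hynot
        rw [cnt_insert hσnot, cnt_insert hwnot]
        have hyS : y ∉ (Finset.Icc 1 i).image σ := hynot.2
        have hb := hblock y hy hyS
        by_cases hyw : y ≤ w (i+1)
        · have : y ≤ σ (i+1) := hσmax y hy hyS hyw
          rw [if_pos hyw, if_pos this]
          omega
        · rw [if_neg hyw]
          omega
  -- Phase 1 maximality (for subsets of Y)
  have max1 : ∀ j, j ≤ p → ∀ V : Finset ℕ, V ⊆ Y →
      (∀ m, cnt V m ≤ cnt ((Finset.Icc 1 j).image w) m) →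
      ∀ m, cnt V m ≤ cnt ((Finset.Icc 1 j).image σ) m := by
    intro j hj V hVY hVW m
    obtain ⟨_, _, hblock⟩ := phase1 j hj
    by_cases hsub : ∀ x ∈ V, m ≤ x → x ∈ (Finset.Icc 1 j).image σ
    · unfold cnt
      apply Finset.card_le_card
      intro x hx
      rw [Finset.mem_filter] at *
      exact ⟨hsub x hx.1 hx.2, hx.2⟩
    · push_neg at hsub
      set cset := V.filter (fun y => m ≤ y ∧ y ∉ (Finset.Icc 1 j).image σ) with hcset
      have hne : cset.Nonempty := by
        obtain ⟨x, hx1, hx2, hx3⟩ := hsub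
        exact ⟨x, by rw [hcset, Finset.mem_filter]; exact ⟨hx1, hx2, hx3⟩⟩
      set y0 := cset.min' hne with hy0
      have hy0mem : y0 ∈ cset := Finset.min'_mem _ _
      rw [hcset, Finset.mem_filter] at hy0mem
      obtain ⟨hy0V, hy0m, hy0S⟩ := hy0mem
      have hy0min : ∀ y ∈ V, m ≤ y → y ∉ (Finset.Icc 1 j).image σ → y0 ≤ y := by
        intro y h1 h2 h3
        exact Finset.min'_le _ _ (by rw [hcset, Finset.mem_filter]; exact ⟨h1, h2, h3⟩)
      have hstep1 : cnt V y0 ≤ cnt ((Finset.Icc 1 j).image σ) y0 :=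
        le_trans (hVW y0) (hblock y0 (hVY hy0V) hy0S)
      have hsplitV := cnt_split (E := V) hy0m
      have hsplitS := cnt_split (E := (Finset.Icc 1 j).image σ) hy0m
      have hpart : (V.filter (fun x => m ≤ x ∧ x < y0)).card ≤
          (((Finset.Icc 1 j).image σ).filter (fun x => m ≤ x ∧ x < y0)).card := by
        apply Finset.card_le_card
        intro x hx
        rw [Finset.mem_filter] at *
        obtain ⟨hxV, hxm, hxy0⟩ := hx
        refine ⟨?_, hxm, hxy0⟩
        by_contra hxS
        have := hy0min x hxV hxm hxS
        omega
      omega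
  -- Phase 2 invariants (by induction from p to n)
  have phase2 : ∀ j, p ≤ j → j ≤ n →
      (Y ⊆ (Finset.Icc 1 j).image σ ∧ ((Finset.Icc 1 j).image σ).card = j) ∧
      (∀ m, cnt ((Finset.Icc 1 j).image σ) m ≤ cnt ((Finset.Icc 1 j).image w) m) ∧
      (∀ V : Finset ℕ, Y ⊆ V → V.card = j →
        (∀ m, cnt V m ≤ cnt ((Finset.Icc 1 j).image w) m) →
        ∀ m, cnt V m ≤ cnt ((Finset.Icc 1 j).image σ) m) := by
    intro j hpj
    induction j, hpj using Nat.le_induction with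
    | base =>
      intro _
      obtain ⟨⟨hSY, hScard⟩, hd, _⟩ := phase1 p le_rfl
      have hSpY : (Finset.Icc 1 p).image σ = Y :=
        Finset.eq_of_subset_of_card_le hSY (by rw [hScard, hYc])
      refine ⟨⟨by rw [hSpY], hScard⟩, hd, ?_⟩
      intro V hYV hVcard hVW m
      have hVY : Y = V := Finset.eq_of_subset_of_card_le hYV (by rw [hVcard, hYc])
      rw [hSpY, ← hVY]
    | succ j hpj ih =>
      intro hjn
      obtain ⟨⟨hYB, hBcard⟩, hBA, hmaxIH⟩ := ih (by omega)
      obtain ⟨q, hq1, hq2, hqv, hqmin, hσJ⟩ := hσ2 (j+1) (by omega) hjn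
      rw [Nat.add_sub_cancel] at hqv hqmin
      set B := (Finset.Icc 1 j).image σ with hBdef
      set A := (Finset.Icc 1 j).image w with hAdef
      set B' := (Finset.Icc 1 (j+1)).image σ with hB'def
      set A' := (Finset.Icc 1 (j+1)).image w with hA'def
      have hA'card : A'.card = j + 1 := img_card hw hjn
      have hAcard : A.card = j := img_card hw (by omega)
      have hwnot : w (j+1) ∉ A := img_new hw hjn
      have hA'ins : A' = insert (w (j+1)) A := icc_succ_image w j
      have hB'ins : B' = insert (σ (j+1)) B := icc_succ_image σ j
      have hAsub : A ⊆ A' := by rw [hA'ins]; exact Finset.subset_insert _ _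
      have f1 : ∀ u, 1 ≤ u → u < q → nth B u < nth A' q := by
        intro u h1 h2
        exact lt_of_le_of_lt (hqmin u h1 h2) (nth_lt_nth A' h1 h2 (hA'card ▸ hq2))
      have f2 : ∀ u, q ≤ u → u ≤ j → nth A' q < nth B u := by
        intro u h1 h2
        exact lt_of_lt_of_le (hqv (by omega)) (nth_le_nth B hq1 h1 (hBcard ▸ h2))
      have hσnotB : σ (j+1) ∉ B := by
        intro hmem
        obtain ⟨u, hu1, hu2, hueq⟩ := nth_surj B hmem
        rw [hBcard] at hu2
        rcases lt_or_ge u q with h | h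
        · have := f1 u hu1 h
          rw [hueq, ← hσJ] at this
          omega
        · have := f2 u h hu2
          rw [hueq, ← hσJ] at this
          omega
      have hB'card : B'.card = j + 1 := by
        rw [hB'ins, Finset.card_insert_of_notMem hσnotB, hBcard]
      have hYB' : Y ⊆ B' := by
        rw [hB'ins]
        exact le_trans hYB (Finset.subset_insert _ _)
      have cntBq : q ≤ j → j + 1 - q ≤ cnt B (nth A' q + 1) := by
        intro h
        have h2 := cnt_of_le_nth (E := B) (k := q) hq1 (hBcard ▸ h)
          (show nth A' q + 1 ≤ nth B q by have := hqv h; omega)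
        rw [hBcard] at h2
        omega
      have nthBA : ∀ t, 1 ≤ t → t ≤ j → nth B t ≤ nth A t := by
        intro t h1 h2
        exact cnt_to_nth (by rw [hBcard, hAcard]) hBA t h1 (hBcard ▸ h2)
      have hwle : w (j+1) ≤ nth A' q := by
        rcases eq_or_lt_of_le hq2 with heq | hlt
        · have hmem : w (j+1) ∈ A' := by rw [hA'ins]; exact Finset.mem_insert_self _ _
          obtain ⟨u, hu1, hu2, hueq⟩ := nth_surj A' hmem
          rw [hA'card] at hu2
          rw [← hueq, heq]
          exact nth_le_nth A' hu1 hu2 (hA'card ▸ le_rfl)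
        · by_contra hgt
          push_neg at hgt
          have hsub : ∀ u, 1 ≤ u → u ≤ q → nth A' u ∈ A.filter (fun y => y ≤ nth A' q) := by
            intro u h1 h2
            have hle : nth A' u ≤ nth A' q := nth_le_nth A' h1 h2 (hA'card ▸ hq2)
            have hmem : nth A' u ∈ insert (w (j+1)) A := by
              rw [← hA'ins]; exact nth_mem A' u h1 (hA'card ▸ (by omega))
            rcases Finset.mem_insert.1 hmem with heq2 | hmem2
            · omega
            · exact Finset.mem_filter.2 ⟨hmem2, hle⟩
          have hql := card_le_of_nth_range (V := A') le_rfl (hA'card ▸ hq2) hsub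
          have hcompl := cnt_compl A (nth A' q)
          have h1 := cntBq (by omega)
          have h2 := hBA (nth A' q + 1)
          rw [hAcard] at hcompl
          omega
      have TT : ∀ t, q ≤ t → t ≤ j → nth A' (t+1) ≤ nth A t := by
        intro t ht1 ht2
        have hsub : ∀ u, t+1 ≤ u → u ≤ j+1 → nth A' u ∈ A.filter (fun y => nth A' (t+1) ≤ y) := by
          intro u h1 h2
          have hge : nth A' (t+1) ≤ nth A' u := nth_le_nth A' (by omega) h1 (hA'card ▸ h2)
          have hgt : nth A' t < nth A' u := nth_lt_nth A' (by omega) (by omega) (hA'card ▸ h2)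
          have hqt : nth A' q ≤ nth A' t := nth_le_nth A' hq1 ht1 (hA'card ▸ (by omega))
          have hmem : nth A' u ∈ insert (w (j+1)) A := by
            rw [← hA'ins]; exact nth_mem A' u (by omega) (hA'card ▸ h2)
          rcases Finset.mem_insert.1 hmem with heq2 | hmem2
          · omega
          · exact Finset.mem_filter.2 ⟨hmem2, hge⟩
        have hcard := card_le_of_nth_range (V := A') (by omega) (hA'card ▸ le_rfl) hsub
        have hcnt : cnt A (nth A' (t+1)) = (A.filter (fun y => nth A' (t+1) ≤ y)).card := rfl
        apply le_nth_of_cnt (by omega) (hAcard ▸ ht2)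
        rw [hAcard]
        omega
      have nB'q : nth B' q = σ (j+1) := by
        have hmem : σ (j+1) ∈ B' := by rw [hB'ins]; exact Finset.mem_insert_self _ _
        apply nth_char hq1 (hB'card ▸ hq2) hmem
        rw [hB'card, hB'ins, cnt_insert hσnotB, if_neg (by omega)]
        rcases eq_or_lt_of_le hq2 with heq | hlt
        · have h0 : cnt B (σ (j+1) + 1) = 0 := by
            rcases Nat.eq_zero_or_pos j with hj0 | hj0
            · have := cnt_le_card B (σ (j+1) + 1)
              omega
            · by_contra hcon
              have hcnt : j + 1 - j ≤ cnt B (σ (j+1) + 1) := by omega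
              have := le_nth_of_cnt (E := B) (k := j) (m := σ (j+1) + 1) (by omega)
                (hBcard ▸ le_rfl) (by rw [hBcard]; omega)
              have h2 := f1 j (by omega) (by omega)
              rw [← hσJ] at h2
              omega
          omega
        · have hqj : q ≤ j := by omega
          have hge := cntBq hqj
          rw [← hσJ] at hge
          have hle2 : cnt B (σ (j+1) + 1) ≤ j + 1 - q := by
            rcases Nat.eq_or_lt_of_le hq1 with h1 | h1
            · have := cnt_le_card B (σ (j+1) + 1)
              omega
            · by_contra hcon
              push_neg at hcon
              have := le_nth_of_cnt (E := B) (k := q - 1) (m := σ (j+1) + 1) (by omega)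
                (hBcard ▸ (by omega)) (by rw [hBcard]; omega)
              have h2 := f1 (q-1) (by omega) (by omega)
              rw [← hσJ] at h2
              omega
          omega
      have nB'lt : ∀ r, 1 ≤ r → r < q → nth B' r = nth B r := by
        intro r h1 h2
        have hrj : r ≤ j := by omega
        have hmem : nth B r ∈ B' := by
          rw [hB'ins]; exact Finset.mem_insert_of_mem (nth_mem B r h1 (hBcard ▸ hrj))
        apply nth_char h1 (hB'card ▸ (by omega)) hmem
        have hlt : nth B r < σ (j+1) := by
          have := f1 r h1 h2; rw [← hσJ] at this; exact this
        rw [hB'card, hB'ins, cnt_insert hσnotB, if_pos (by omega)]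
        have e1 := cnt_succ B (nth B r)
        rw [if_pos (nth_mem B r h1 (hBcard ▸ hrj))] at e1
        have e2 := nth_cnt B r h1 (hBcard ▸ hrj)
        rw [hBcard] at e2
        omega
      have nB'gt : ∀ r, q < r → r ≤ j + 1 → nth B' r = nth B (r-1) := by
        intro r h1 h2
        have hr1 : 1 ≤ r - 1 := by omega
        have hrj : r - 1 ≤ j := by omega
        have hmem : nth B (r-1) ∈ B' := by
          rw [hB'ins]; exact Finset.mem_insert_of_mem (nth_mem B (r-1) hr1 (hBcard ▸ hrj))
        have hgt : σ (j+1) < nth B (r-1) := by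
          have := f2 (r-1) (by omega) hrj; rw [← hσJ] at this; exact this
        apply nth_char (by omega) (hB'card ▸ h2) hmem
        rw [hB'card, hB'ins, cnt_insert hσnotB, if_neg (by omega)]
        have e1 := cnt_succ B (nth B (r-1))
        rw [if_pos (nth_mem B (r-1) hr1 (hBcard ▸ hrj))] at e1
        have e2 := nth_cnt B (r-1) hr1 (hBcard ▸ hrj)
        rw [hBcard] at e2
        omega
      have domB'A' : ∀ m, cnt B' m ≤ cnt A' m := by
        intro m
        by_cases hm : m ≤ σ (j+1)
        · rw [hB'ins, cnt_insert hσnotB, if_pos hm]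
          have hd : j + 2 - q ≤ cnt A' m := by
            have := cnt_of_le_nth (E := A') (k := q) (m := m) hq1 (hA'card ▸ hq2)
              (by rw [← hσJ]; exact hm)
            rw [hA'card] at this
            omega
          rcases le_or_gt (cnt A' m) j with hdle | hdgt
          · have hk01 : 1 ≤ j + 1 - cnt A' m := by omega
            have hk0q : j + 1 - cnt A' m < q := by omega
            have hk0A' : nth A' (j + 1 - cnt A' m) < m := by
              by_contra hcon
              push_neg at hcon
              have := cnt_of_le_nth (E := A') (k := j + 1 - cnt A' m) hk01
                (hA'card ▸ (by omega)) hcon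
              rw [hA'card] at this
              omega
            have hBk0 : nth B (j + 1 - cnt A' m) < m :=
              lt_of_le_of_lt (hqmin _ hk01 hk0q) hk0A'
            have hfin : cnt B m ≤ j - (j + 1 - cnt A' m) := by
              by_contra hcon
              push_neg at hcon
              have := le_nth_of_cnt (E := B) (k := j + 1 - cnt A' m) (m := m) hk01
                (hBcard ▸ (by omega)) (by rw [hBcard]; omega)
              omega
            omega
          · have := cnt_le_card B m
            rw [hBcard] at this
            omega
        · rw [hB'ins, cnt_insert hσnotB, if_neg hm]
          have h1 := hBA m
          have h2 := cnt_subset hAsub m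
          omega
      refine ⟨⟨hYB', hB'card⟩, domB'A', ?_⟩
      intro V hYV hVcard hVA'
      have nthVA' : ∀ u, 1 ≤ u → u ≤ j+1 → nth V u ≤ nth A' u := by
        intro u h1 h2
        exact cnt_to_nth (by rw [hVcard, hA'card]) hVA' u h1 (hVcard ▸ h2)
      have hremove : ∀ s, 1 ≤ s → s ≤ j + 1 → (∀ u, s < u → u ≤ q → nth V u ∈ Y) →
          ∀ m, cnt (V.erase (nth V s)) m ≤ cnt A m := by
        intro s hs1 hs2 hsY m
        have hsV : nth V s ∈ V := nth_mem V s hs1 (hVcard ▸ hs2)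
        rw [cnt_erase hsV]
        by_cases hm : m ≤ nth V s
        · rw [if_pos hm]
          have h1 := hVA' m
          have h2 : cnt A' m ≤ cnt A m + 1 := by
            rw [hA'ins, cnt_insert hwnot]
            split <;> omega
          have h3 : 1 ≤ cnt V m :=
            Finset.card_pos.2 ⟨nth V s, Finset.mem_filter.2 ⟨hsV, hm⟩⟩
          omega
        · rw [if_neg hm]
          push_neg at hm
          rcases Nat.eq_zero_or_pos (cnt V m) with h0 | h0
          · omega
          have hcj : cnt V m ≤ j := by
            by_contra hcon
            push_neg at hcon
            have hcle : cnt V m ≤ j + 1 := hVcard ▸ cnt_le_card V m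
            have ha : m ≤ nth V 1 := le_nth_of_cnt (by omega) (hVcard ▸ (by omega))
              (by rw [hVcard]; omega)
            have hb : nth V 1 ≤ nth V s := nth_le_nth V (by omega) hs1 (hVcard ▸ hs2)
            omega
          have ht1 : 1 ≤ j + 1 - cnt V m := by omega
          have htj : j + 1 - cnt V m ≤ j := by omega
          have hVt1 : m ≤ nth V (j + 1 - cnt V m + 1) := le_nth_of_cnt (by omega)
            (hVcard ▸ (by omega)) (by rw [hVcard]; omega)
          have hts : s ≤ j + 1 - cnt V m := by
            by_contra hcon
            push_neg at hcon
            have : nth V (j + 1 - cnt V m + 1) ≤ nth V s :=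
              nth_le_nth V (by omega) (by omega) (hVcard ▸ hs2)
            omega
          have key : m ≤ nth A (j + 1 - cnt V m) := by
            rcases le_or_gt q (j + 1 - cnt V m) with hqt | htq
            · have h1 := TT (j + 1 - cnt V m) hqt htj
              have h2 := nthVA' (j + 1 - cnt V m + 1) (by omega) (by omega)
              omega
            · have hYt1 : nth V (j + 1 - cnt V m + 1) ∈ Y := hsY _ (by omega) (by omega)
              have hzσ : nth V (j + 1 - cnt V m + 1) ≤ nth A' q :=
                le_trans (nthVA' _ (by omega) (by omega))
                  (nth_le_nth A' (by omega) (by omega) (hA'card ▸ hq2))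
              have hsub1 : ∀ u, j + 1 - cnt V m + 1 ≤ u → u ≤ q →
                  nth V u ∈ B.filter (fun y => nth V (j + 1 - cnt V m + 1) ≤ y ∧ y ≤ nth A' q) := by
                intro u h1 h2
                refine Finset.mem_filter.2 ⟨hYB (hsY u (by omega) h2), ?_, ?_⟩
                · exact nth_le_nth V (by omega) h1 (hVcard ▸ (by omega))
                · exact le_trans (nthVA' u (by omega) (by omega))
                    (nth_le_nth A' (by omega) h2 (hA'card ▸ hq2))
              have hpart1 := card_le_of_nth_range (V := V) (by omega)
                (hVcard ▸ (show q ≤ j + 1 by omega)) hsub1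
              have hpart2 : j + 1 - q ≤ cnt B (nth A' q + 1) := by
                rcases le_or_gt q j with h | h
                · exact cntBq h
                · omega
              have hcomb : (B.filter (fun y => nth V (j + 1 - cnt V m + 1) ≤ y ∧ y ≤ nth A' q)).card
                  + cnt B (nth A' q + 1) ≤ cnt B (nth V (j + 1 - cnt V m + 1)) := by
                have hdisj : Disjoint
                    (B.filter (fun y => nth V (j + 1 - cnt V m + 1) ≤ y ∧ y ≤ nth A' q))
                    (B.filter (fun y => nth A' q + 1 ≤ y)) := by
                  rw [Finset.disjoint_filter]
                  rintro y _ ⟨_, hy2⟩ hy3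
                  omega
                have hsubU : (B.filter (fun y => nth V (j + 1 - cnt V m + 1) ≤ y ∧ y ≤ nth A' q))
                    ∪ (B.filter (fun y => nth A' q + 1 ≤ y))
                    ⊆ B.filter (fun y => nth V (j + 1 - cnt V m + 1) ≤ y) := by
                  intro x hx
                  rw [Finset.mem_union, Finset.mem_filter, Finset.mem_filter] at hx
                  rcases hx with ⟨hx1, hx2, _⟩ | ⟨hx1, hx2⟩
                  · exact Finset.mem_filter.2 ⟨hx1, hx2⟩
                  · exact Finset.mem_filter.2 ⟨hx1, by omega⟩
                calc (B.filter (fun y => nth V (j + 1 - cnt V m + 1) ≤ y ∧ y ≤ nth A' q)).card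
                    + cnt B (nth A' q + 1)
                    = ((B.filter (fun y => nth V (j + 1 - cnt V m + 1) ≤ y ∧ y ≤ nth A' q))
                      ∪ (B.filter (fun y => nth A' q + 1 ≤ y))).card :=
                      (Finset.card_union_of_disjoint hdisj).symm
                  _ ≤ (B.filter (fun y => nth V (j + 1 - cnt V m + 1) ≤ y)).card :=
                      Finset.card_le_card hsubU
              have hBt : nth V (j + 1 - cnt V m + 1) ≤ nth B (j + 1 - cnt V m) := by
                apply le_nth_of_cnt ht1 (hBcard ▸ htj)
                rw [hBcard]
                omega
              have := nthBA (j + 1 - cnt V m) ht1 htj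
              omega
          have := cnt_of_le_nth (E := A) (k := j + 1 - cnt V m) ht1 (hAcard ▸ htj) key
          rw [hAcard] at this
          omega
      have main : ∀ r, 1 ≤ r → r ≤ j + 1 → nth V r ≤ nth B' r := by
        intro r hr1 hr2
        rcases lt_trichotomy r q with hrq | hrq | hrq
        · rw [nB'lt r hr1 hrq]
          by_cases hall : ∀ u, r < u → u ≤ j + 1 → nth V u ∈ Y
          · have hsub : ∀ u, r+1 ≤ u → u ≤ j+1 →
                nth V u ∈ B.filter (fun y => nth V (r+1) ≤ y) := by
              intro u h1 h2
              exact Finset.mem_filter.2 ⟨hYB (hall u (by omega) h2),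
                nth_le_nth V (by omega) h1 (hVcard ▸ h2)⟩
            have hcard := card_le_of_nth_range (V := V) (by omega) (hVcard ▸ le_rfl) hsub
            have hBr : nth V (r+1) ≤ nth B r := by
              apply le_nth_of_cnt hr1 (hBcard ▸ (by omega))
              rw [hBcard]
              have : cnt B (nth V (r+1)) = (B.filter (fun y => nth V (r+1) ≤ y)).card := rfl
              omega
            have : nth V r ≤ nth V (r+1) := nth_le_nth V hr1 (by omega) (hVcard ▸ (by omega))
            omega
          · push_neg at hall
            obtain ⟨u0, hu01, hu02, hu03⟩ := hall
            have hne : ((Finset.Icc (r+1) (j+1)).filter (fun s => nth V s ∉ Y)).Nonempty :=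
              ⟨u0, by rw [Finset.mem_filter, Finset.mem_Icc]; exact ⟨⟨by omega, hu02⟩, hu03⟩⟩
            set s := ((Finset.Icc (r+1) (j+1)).filter (fun s => nth V s ∉ Y)).max' hne with hsdef
            have hsmem := ((Finset.Icc (r+1) (j+1)).filter (fun s => nth V s ∉ Y)).max'_mem hne
            rw [Finset.mem_filter, Finset.mem_Icc] at hsmem
            obtain ⟨⟨hs1, hs2⟩, hsY⟩ := hsmem
            have hsmax : ∀ u, s < u → u ≤ q → nth V u ∈ Y := by
              intro u h1 h2
              by_contra hcon
              have : u ≤ s := Finset.le_max' _ _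
                (by rw [Finset.mem_filter, Finset.mem_Icc]; exact ⟨⟨by omega, by omega⟩, hcon⟩)
              omega
            have hVA := hremove s (by omega) hs2 hsmax
            have hsV : nth V s ∈ V := nth_mem V s (by omega) (hVcard ▸ hs2)
            have hVerase : (V.erase (nth V s)).card = j := by
              rw [Finset.card_erase_of_mem hsV, hVcard]
              omega
            have hYVe : Y ⊆ V.erase (nth V s) := Finset.subset_erase.2 ⟨hYV, hsY⟩
            have hIH := hmaxIH (V.erase (nth V s)) hYVe hVerase hVA
            have hx := nth_cnt V r hr1 (hVcard ▸ (by omega))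
            have hxs : nth V r ≤ nth V s := nth_le_nth V hr1 (by omega) (hVcard ▸ hs2)
            have hce := cnt_erase hsV (nth V r)
            rw [if_pos hxs] at hce
            have hIHx := hIH (nth V r)
            apply le_nth_of_cnt hr1 (hBcard ▸ (by omega))
            rw [hBcard]
            rw [hVcard] at hx
            omega
        · rw [hrq, nB'q, hσJ]
          exact nthVA' q hq1 hq2
        · rw [nB'gt r hrq hr2]
          by_cases hle : nth V r ≤ σ (j+1)
          · have h2 := f2 (r-1) (by omega) (by omega)
            rw [hσJ] at hle
            omega
          · push_neg at hle
            have hqj : q ≤ j := by omega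
            have hex : ∃ s0, 1 ≤ s0 ∧ s0 ≤ q ∧ nth V s0 ∉ Y := by
              by_contra hcon
              push_neg at hcon
              have hsub : ∀ u, 1 ≤ u → u ≤ q → nth V u ∈ B.filter (fun y => y ≤ nth A' q) := by
                intro u h1 h2
                exact Finset.mem_filter.2 ⟨hYB (hcon u h1 h2),
                  le_trans (nthVA' u h1 (by omega)) (nth_le_nth A' h1 h2 (hA'card ▸ hq2))⟩
              have hcard := card_le_of_nth_range (V := V) le_rfl
                (hVcard ▸ (show q ≤ j + 1 by omega)) hsub
              have hcompl := cnt_compl B (nth A' q)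
              have h2 := cntBq hqj
              rw [hBcard] at hcompl
              omega
            obtain ⟨s0, hs01, hs02, hs03⟩ := hex
            have hne : ((Finset.Icc 1 q).filter (fun s => nth V s ∉ Y)).Nonempty :=
              ⟨s0, by rw [Finset.mem_filter, Finset.mem_Icc]; exact ⟨⟨hs01, hs02⟩, hs03⟩⟩
            set s := ((Finset.Icc 1 q).filter (fun s => nth V s ∉ Y)).max' hne with hsdef
            have hsmem := ((Finset.Icc 1 q).filter (fun s => nth V s ∉ Y)).max'_mem hne
            rw [Finset.mem_filter, Finset.mem_Icc] at hsmem
            obtain ⟨⟨hs1, hs2⟩, hsY⟩ := hsmem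
            have hsmax : ∀ u, s < u → u ≤ q → nth V u ∈ Y := by
              intro u h1 h2
              by_contra hcon
              have : u ≤ s := Finset.le_max' _ _
                (by rw [Finset.mem_filter, Finset.mem_Icc]; exact ⟨⟨by omega, h2⟩, hcon⟩)
              omega
            have hVA := hremove s hs1 (by omega) hsmax
            have hsV : nth V s ∈ V := nth_mem V s hs1 (hVcard ▸ (by omega))
            have hVerase : (V.erase (nth V s)).card = j := by
              rw [Finset.card_erase_of_mem hsV, hVcard]
              omega
            have hYVe : Y ⊆ V.erase (nth V s) := Finset.subset_erase.2 ⟨hYV, hsY⟩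
            have hIH := hmaxIH (V.erase (nth V s)) hYVe hVerase hVA
            have hx := nth_cnt V r hr1 (hVcard ▸ hr2)
            have hxσ : nth V s ≤ nth A' q :=
              le_trans (nthVA' s hs1 (by omega)) (nth_le_nth A' hs1 hs2 (hA'card ▸ hq2))
            have hlt2 : nth V s < nth V r := by
              rw [hσJ] at hle
              omega
            have hce := cnt_erase hsV (nth V r)
            rw [if_neg (by omega)] at hce
            have hIHx := hIH (nth V r)
            apply le_nth_of_cnt (E := B) (k := r - 1) (by omega) (hBcard ▸ (by omega))
            rw [hBcard]
            rw [hVcard] at hx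
            omega
      intro m
      exact nth_to_cnt (by rw [hVcard, hB'card])
        (fun r h1 h2 => main r h1 (by rw [hVcard] at h2; exact h2)) m

  -- S p = Y
  have hSpY : (Finset.Icc 1 p).image σ = Y := by
    obtain ⟨⟨h1, h2⟩, _, _⟩ := phase1 p le_rfl
    apply Finset.eq_of_subset_of_card_le h1
    rw [h2, hYc]
  -- assemble
  refine ⟨hSpY, ?_, ?_, ?_⟩
  · -- Bruhat n σ w
    intro i hi
    rw [dom_iff]
    rcases le_or_gt i p with hip | hip
    · obtain ⟨⟨_, h2⟩, hd, _⟩ := phase1 i hip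
      exact ⟨by rw [h2, img_card hw hi], hd⟩
    · obtain ⟨⟨_, h2⟩, hd, _⟩ := phase2 i (by omega) hi
      exact ⟨by rw [h2, img_card hw hi], hd⟩
  · -- part 3 from part 4
    intro v hv himg hnb hbw
    apply hnb
    -- prove Bruhat n v σ
    intro i hi
    rw [dom_iff]
    have hVcard : ((Finset.Icc 1 i).image v).card = i := img_card hv hi
    have hVW : ∀ m, cnt ((Finset.Icc 1 i).image v) m ≤ cnt ((Finset.Icc 1 i).image w) m :=
      (dom_iff.1 (hbw i hi)).2
    rcases le_or_gt i p with hip | hip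
    · obtain ⟨⟨_, h2⟩, _, _⟩ := phase1 i hip
      refine ⟨by rw [hVcard, h2], ?_⟩
      apply max1 i hip _ _ hVW
      rw [← himg]
      apply Finset.image_subset_image
      intro x hx
      rw [Finset.mem_Icc] at *
      omega
    · obtain ⟨⟨_, h2⟩, _, hmax⟩ := phase2 i (by omega) hi
      refine ⟨by rw [hVcard, h2], ?_⟩
      apply hmax _ _ hVcard hVW
      rw [← himg]
      apply Finset.image_subset_image
      intro x hx
      rw [Finset.mem_Icc] at *
      omega
  · -- part 4 (same proof)
    intro v hv himg hbw
    intro i hi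
    rw [dom_iff]
    have hVcard : ((Finset.Icc 1 i).image v).card = i := img_card hv hi
    have hVW : ∀ m, cnt ((Finset.Icc 1 i).image v) m ≤ cnt ((Finset.Icc 1 i).image w) m :=
      (dom_iff.1 (hbw i hi)).2
    rcases le_or_gt i p with hip | hip
    · obtain ⟨⟨_, h2⟩, _, _⟩ := phase1 i hip
      refine ⟨by rw [hVcard, h2], ?_⟩
      apply max1 i hip _ _ hVW
      rw [← himg]
      apply Finset.image_subset_image
      intro x hx
      rw [Finset.mem_Icc] at *
      omega
    · obtain ⟨⟨_, h2⟩, _, hmax⟩ := phase2 i (by omega) hi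
      refine ⟨by rw [hVcard, h2], ?_⟩
      apply hmax _ _ hVcard hVW
      rw [← himg]
      apply Finset.image_subset_image
      intro x hx
      rw [Finset.mem_Icc] at *
      omega
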